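/- Let τ > 0, μ > 0, let λ : ℝ → ℝ and F^c : ℝ → ℝ be locally Lipschitz with λ(u) > 0 and F^c(x) > 0 for all u, x, and let s : ℝ → ℝ be differentiable with continuous derivative ṡ. If w₁, w₂ : [0,τ] → ℝ are differentiable functions with w₁(0) = w₂(0) = 0, with 0 ≤ wᵢ(t) ≤ t for all t ∈ [0,τ], and both satisfy the head-of-line waiting-time ODE ẇ(t) = 1 − (ṡ(t) + μ s(t)) / (λ(t − w(t)) · F^c(w(t))) for all t ∈ [0,τ], then w₁(t) = w₂(t) for all t ∈ [0,τ]. -/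

import Mathlib

open Set Metric

/-- A locally Lipschitz real function is Lipschitz on every compact set. -/
lemma exists_lipschitzOnWith_of_locallyLipschitz {f : ℝ → ℝ} (hf : LocallyLipschitz f)
    {s : Set ℝ} (hs : IsCompact s) : ∃ K : NNReal, LipschitzOnWith K f s := by
  rcases s.eq_empty_or_nonempty with rfl | hne
  · exact ⟨0, by simp⟩
  have h : ∀ x : ℝ, ∃ (K : NNReal) (r : ℝ), 0 < r ∧ LipschitzOnWith K f (ball x r) := by
    intro x
    obtain ⟨K, t, ht, hK⟩ := hf x
    obtain ⟨r, hr, hball⟩ := Metric.mem_nhds_iff.mp ht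
    exact ⟨K, r, hr, hK.mono hball⟩
  choose K r hr hK using h
  obtain ⟨F, hF⟩ := hs.elim_finite_subcover (fun x : ℝ => ball x (r x))
    (fun x => isOpen_ball) (fun x _ => Set.mem_iUnion.mpr ⟨x, mem_ball_self (hr x)⟩)
  obtain ⟨δ, hδ, hleb⟩ := lebesgue_number_lemma_of_metric
    (c := fun i : F => ball (i:ℝ) (r i)) hs
    (fun i => isOpen_ball) (by
      intro x hx
      obtain ⟨i, hi⟩ := Set.mem_iUnion₂.mp (hF hx)
      exact Set.mem_iUnion.mpr ⟨⟨i, hi.1⟩, hi.2⟩)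
  obtain ⟨M, hM⟩ := hs.exists_bound_of_continuousOn hf.continuous.continuousOn
  set Kmax : NNReal := F.sup K with hKmax
  set Kr : ℝ := max (Kmax : ℝ) (2 * max M 0 / δ) with hKr
  have hKr0 : 0 ≤ Kr := le_trans Kmax.coe_nonneg (le_max_left _ _)
  refine ⟨Kr.toNNReal, LipschitzOnWith.of_dist_le_mul fun x hx y hy => ?_⟩
  rw [Real.coe_toNNReal _ hKr0]
  rcases lt_or_ge (dist x y) δ with hlt | hge
  · obtain ⟨i, hi⟩ := hleb x hx
    have hxi : x ∈ ball (i : ℝ) (r i) := hi (mem_ball_self hδ)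
    have hyi : y ∈ ball (i : ℝ) (r i) := hi (by simpa [dist_comm] using hlt)
    calc dist (f x) (f y) ≤ (K i) * dist x y := (hK i).dist_le_mul x hxi y hyi
      _ ≤ Kr * dist x y := by
          apply mul_le_mul_of_nonneg_right _ dist_nonneg
          calc ((K i : ℝ)) ≤ (Kmax : ℝ) := by exact_mod_cast Finset.le_sup i.2
            _ ≤ Kr := le_max_left _ _
  · have hM0 : ∀ z ∈ s, |f z| ≤ max M 0 := fun z hz =>
      le_trans (by simpa [Real.norm_eq_abs] using hM z hz) (le_max_left _ _)
    calc dist (f x) (f y) ≤ |f x| + |f y| := by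
          rw [Real.dist_eq]; exact (abs_sub _ _)
      _ ≤ 2 * max M 0 := by linarith [hM0 x hx, hM0 y hy]
      _ = (2 * max M 0 / δ) * δ := by field_simp
      _ ≤ (2 * max M 0 / δ) * dist x y := by
          apply mul_le_mul_of_nonneg_left hge
          positivity
      _ ≤ Kr * dist x y := mul_le_mul_of_nonneg_right (le_max_right _ _) dist_nonneg

/-- Uniqueness of solutions of the head-of-line waiting-time ODE
`ẇ(t) = 1 − (ṡ(t) + μ s(t)) / (λ(t − w(t)) · F^c(w(t)))` on `[0, τ]`. -/
theorem hwt_ode_uniqueness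
    (τ μ : ℝ) (hτ : 0 < τ) (hμ : 0 < μ)
    (lam Fc : ℝ → ℝ)
    (hlamLip : LocallyLipschitz lam) (hFcLip : LocallyLipschitz Fc)
    (hlam_pos : ∀ u, 0 < lam u) (hFc_pos : ∀ x, 0 < Fc x)
    (s s' : ℝ → ℝ)
    (hs : ∀ t, HasDerivAt s (s' t) t) (hs' : Continuous s')
    (w₁ w₂ : ℝ → ℝ)
    (hw₁0 : w₁ 0 = 0) (hw₂0 : w₂ 0 = 0)
    (hw₁b : ∀ t ∈ Set.Icc (0:ℝ) τ, 0 ≤ w₁ t ∧ w₁ t ≤ t)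
    (hw₂b : ∀ t ∈ Set.Icc (0:ℝ) τ, 0 ≤ w₂ t ∧ w₂ t ≤ t)
    (hw₁ode : ∀ t ∈ Set.Icc (0:ℝ) τ,
      HasDerivWithinAt w₁ (1 - (s' t + μ * s t) / (lam (t - w₁ t) * Fc (w₁ t)))
        (Set.Icc (0:ℝ) τ) t)
    (hw₂ode : ∀ t ∈ Set.Icc (0:ℝ) τ,
      HasDerivWithinAt w₂ (1 - (s' t + μ * s t) / (lam (t - w₂ t) * Fc (w₂ t)))
        (Set.Icc (0:ℝ) τ) t) :
    ∀ t ∈ Set.Icc (0:ℝ) τ, w₁ t = w₂ t := by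
  -- clamp times into `[0, τ]`
  set cl : ℝ → ℝ := fun t => max 0 (min t τ) with hcl
  have hclmem : ∀ t, cl t ∈ Set.Icc (0:ℝ) τ := fun t =>
    ⟨le_max_left _ _, max_le hτ.le (min_le_right _ _)⟩
  have hcl_eq : ∀ t ∈ Set.Icc (0:ℝ) τ, cl t = t := by
    intro t ht
    simp [hcl, min_eq_left ht.2, max_eq_right ht.1]
  -- the (time-clamped) vector field
  set c : ℝ → ℝ := fun t => s' (cl t) + μ * s (cl t) with hc
  set v : ℝ → ℝ → ℝ := fun t x => 1 - c t / (lam (cl t - x) * Fc x) with hv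
  -- Lipschitz constants on compact sets
  obtain ⟨Kl, hKl⟩ := exists_lipschitzOnWith_of_locallyLipschitz hlamLip
    (isCompact_Icc : IsCompact (Set.Icc (-τ) τ))
  obtain ⟨KF, hKF⟩ := exists_lipschitzOnWith_of_locallyLipschitz hFcLip
    (isCompact_Icc : IsCompact (Set.Icc (0:ℝ) τ))
  -- min/max of lam on [-τ, τ]
  obtain ⟨xl, _, hxl⟩ := (isCompact_Icc : IsCompact (Set.Icc (-τ) τ)).exists_isMinOn
    ⟨0, by constructor <;> linarith⟩ hlamLip.continuous.continuousOn
  obtain ⟨Xl, _, hXl⟩ := (isCompact_Icc : IsCompact (Set.Icc (-τ) τ)).exists_isMaxOn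
    ⟨0, by constructor <;> linarith⟩ hlamLip.continuous.continuousOn
  set ml := lam xl with hml
  set Ml := lam Xl with hMl
  have hml_pos : 0 < ml := hlam_pos xl
  have hml_le : ∀ u ∈ Set.Icc (-τ) τ, ml ≤ lam u := fun u hu => hxl hu
  have hMl_ge : ∀ u ∈ Set.Icc (-τ) τ, lam u ≤ Ml := fun u hu => hXl hu
  -- min/max of Fc on [0, τ]
  obtain ⟨xF, _, hxF⟩ := (isCompact_Icc : IsCompact (Set.Icc (0:ℝ) τ)).exists_isMinOn
    ⟨0, by constructor <;> linarith⟩ hFcLip.continuous.continuousOn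
  obtain ⟨XF, _, hXF⟩ := (isCompact_Icc : IsCompact (Set.Icc (0:ℝ) τ)).exists_isMaxOn
    ⟨0, by constructor <;> linarith⟩ hFcLip.continuous.continuousOn
  set mF := Fc xF with hmF
  set MF := Fc XF with hMF
  have hmF_pos : 0 < mF := hFc_pos xF
  have hmF_le : ∀ u ∈ Set.Icc (0:ℝ) τ, mF ≤ Fc u := fun u hu => hxF hu
  have hMF_ge : ∀ u ∈ Set.Icc (0:ℝ) τ, Fc u ≤ MF := fun u hu => hXF hu
  have hMl_pos : 0 < Ml := hlam_pos Xl
  have hMF_pos : 0 < MF := hFc_pos XF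
  -- bound on c
  have hscont : Continuous s := by
    apply continuous_iff_continuousAt.mpr
    exact fun t => (hs t).continuousAt
  obtain ⟨C, hC⟩ := (isCompact_Icc : IsCompact (Set.Icc (0:ℝ) τ)).exists_bound_of_continuousOn
    ((hs'.continuousOn).add ((continuous_const.mul hscont).continuousOn))
  have hC0 : 0 ≤ C := le_trans (norm_nonneg _) (hC 0 ⟨le_refl _, hτ.le⟩)
  have hcbd : ∀ t, |c t| ≤ C := by
    intro t
    simpa [Real.norm_eq_abs] using hC (cl t) (hclmem t)
  -- the global Lipschitz constant
  set D : ℝ := ml * mF with hD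
  have hD_pos : 0 < D := mul_pos hml_pos hmF_pos
  set Kr : ℝ := C * ((Kl : ℝ) * MF + Ml * (KF : ℝ)) / (D * D) with hKrdef
  have hKr0 : 0 ≤ Kr := by positivity
  -- the vector field is Lipschitz on [0, τ]
  have hvlip : ∀ t, LipschitzOnWith Kr.toNNReal (v t) (Set.Icc (0:ℝ) τ) := by
    intro t
    refine LipschitzOnWith.of_dist_le_mul fun x hx y hy => ?_
    rw [Real.coe_toNNReal _ hKr0]
    have hclt := hclmem t
    have hux : cl t - x ∈ Set.Icc (-τ) τ := by
      constructor
      · have := hclt.1; have := hx.2; linarith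
      · have := hclt.2; have := hx.1; linarith
    have huy : cl t - y ∈ Set.Icc (-τ) τ := by
      constructor
      · have := hclt.1; have := hy.2; linarith
      · have := hclt.2; have := hy.1; linarith
    set Ax := lam (cl t - x) * Fc x with hAx
    set Ay := lam (cl t - y) * Fc y with hAy
    have hAxD : D ≤ Ax := mul_le_mul (hml_le _ hux) (hmF_le _ hx) hmF_pos.le (hlam_pos _).le
    have hAyD : D ≤ Ay := mul_le_mul (hml_le _ huy) (hmF_le _ hy) hmF_pos.le (hlam_pos _).le
    have hAx_pos : 0 < Ax := lt_of_lt_of_le hD_pos hAxD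
    have hAy_pos : 0 < Ay := lt_of_lt_of_le hD_pos hAyD
    have hvdiff : v t x - v t y = c t * (Ax - Ay) / (Ax * Ay) := by
      simp only [hv]
      show (1 - c t / Ax) - (1 - c t / Ay) = _
      rw [sub_sub_sub_cancel_left, div_sub_div _ _ hAy_pos.ne' hAx_pos.ne']
      ring
    have hlamdiff : |lam (cl t - x) - lam (cl t - y)| ≤ (Kl : ℝ) * |x - y| := by
      have := hKl.dist_le_mul _ hux _ huy
      rw [Real.dist_eq, Real.dist_eq] at this
      calc |lam (cl t - x) - lam (cl t - y)| ≤ (Kl : ℝ) * |cl t - x - (cl t - y)| := this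
        _ = (Kl : ℝ) * |x - y| := by rw [show cl t - x - (cl t - y) = -(x - y) by ring, abs_neg]
    have hFcdiff : |Fc x - Fc y| ≤ (KF : ℝ) * |x - y| := by
      have := hKF.dist_le_mul _ hx _ hy
      rwa [Real.dist_eq, Real.dist_eq] at this
    have hAdiff : |Ay - Ax| ≤ ((Kl : ℝ) * MF + Ml * (KF : ℝ)) * |x - y| := by
      have hsplit : Ay - Ax = (lam (cl t - y) - lam (cl t - x)) * Fc y
          + lam (cl t - x) * (Fc y - Fc x) := by
        simp only [hAx, hAy]; ring
      calc |Ay - Ax| ≤ |(lam (cl t - y) - lam (cl t - x)) * Fc y|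
            + |lam (cl t - x) * (Fc y - Fc x)| := by rw [hsplit]; exact abs_add_le _ _
        _ = |lam (cl t - y) - lam (cl t - x)| * |Fc y|
            + |lam (cl t - x)| * |Fc y - Fc x| := by rw [abs_mul, abs_mul]
        _ ≤ ((Kl : ℝ) * |x - y|) * MF + Ml * ((KF : ℝ) * |x - y|) := by
            apply add_le_add
            · apply mul_le_mul _ _ (abs_nonneg _) (by positivity)
              · rw [abs_sub_comm]; exact hlamdiff
              · rw [abs_of_pos (hFc_pos y)]; exact hMF_ge _ hy
            · apply mul_le_mul _ _ (abs_nonneg _) hMl_pos.le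
              · rw [abs_of_pos (hlam_pos _)]; exact hMl_ge _ hux
              · rw [abs_sub_comm]; exact hFcdiff
        _ = ((Kl : ℝ) * MF + Ml * (KF : ℝ)) * |x - y| := by ring
    have hAdiff' : |Ax - Ay| ≤ ((Kl : ℝ) * MF + Ml * (KF : ℝ)) * |x - y| := by
      rw [abs_sub_comm]; exact hAdiff
    rw [Real.dist_eq, Real.dist_eq, hvdiff]
    rw [abs_div, abs_mul]
    have hden : |Ax * Ay| = Ax * Ay := abs_of_pos (mul_pos hAx_pos hAy_pos)
    rw [hden]
    calc |c t| * |Ax - Ay| / (Ax * Ay)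
        ≤ C * (((Kl : ℝ) * MF + Ml * (KF : ℝ)) * |x - y|) / (D * D) := by
          gcongr
          all_goals first
            | exact mul_pos hD_pos hD_pos
            | exact hcbd t
            | exact hAdiff'
            | exact mul_le_mul hAxD hAyD hD_pos.le (le_trans hD_pos.le hAxD)
      _ = Kr * |x - y| := by rw [hKrdef]; ring
  -- apply the uniqueness theorem
  have key : Set.EqOn w₁ w₂ (Set.Icc 0 τ) := by
    apply ODE_solution_unique_of_mem_Icc_right (v := v) (s := fun _ => Set.Icc (0:ℝ) τ)
      (K := Kr.toNNReal) (fun t _ => hvlip t)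
    · exact fun t ht => (hw₁ode t ht).continuousWithinAt
    · intro t ht
      have htIcc : t ∈ Set.Icc (0:ℝ) τ := ⟨ht.1, ht.2.le⟩
      have hveq : v t (w₁ t) = 1 - (s' t + μ * s t) / (lam (t - w₁ t) * Fc (w₁ t)) := by
        simp only [hv, hc, hcl_eq t htIcc]
      rw [hveq]
      exact (hw₁ode t htIcc).mono_of_mem_nhdsWithin (Icc_mem_nhdsGE_of_mem ht)
    · intro t ht
      have htIcc : t ∈ Set.Icc (0:ℝ) τ := ⟨ht.1, ht.2.le⟩
      exact ⟨(hw₁b t htIcc).1, le_trans (hw₁b t htIcc).2 htIcc.2⟩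
    · exact fun t ht => (hw₂ode t ht).continuousWithinAt
    · intro t ht
      have htIcc : t ∈ Set.Icc (0:ℝ) τ := ⟨ht.1, ht.2.le⟩
      have hveq : v t (w₂ t) = 1 - (s' t + μ * s t) / (lam (t - w₂ t) * Fc (w₂ t)) := by
        simp only [hv, hc, hcl_eq t htIcc]
      rw [hveq]
      exact (hw₂ode t htIcc).mono_of_mem_nhdsWithin (Icc_mem_nhdsGE_of_mem ht)
    · intro t ht
      have htIcc : t ∈ Set.Icc (0:ℝ) τ := ⟨ht.1, ht.2.le⟩
      exact ⟨(hw₂b t htIcc).1, le_trans (hw₂b t htIcc).2 htIcc.2⟩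
    · rw [hw₁0, hw₂0]
  exact fun t ht => key ht
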